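/- Let 𝒱₁ = ℝ^d, 𝒱₂ = ℝ^e, 𝒱 = 𝒱₁ ⊕ 𝒱₂, let 1/4 < α ≤ 1/3 and 1/3 < γ ≤ 1/2 with 2α + γ > 1, and let (Ξ¹, Ξ², B³) and (Ξ̃¹, Ξ̃², B̃³) be anisotropic rough paths of roughness (α, γ) on [0,T], both of whose seven component Hölder norms are bounded by a common constant M > 0. Suppose moreover that max{ ‖B¹−B̃¹‖_α, ‖B²−B̃²‖_{2α}, ‖B³−B̃³‖_{3α}, ‖W¹−W̃¹‖_γ, ‖W²−W̃²‖_{2γ}, ‖I[B,W]−I[B̃,W̃]‖_{α+γ}, ‖I[W,B]−I[W̃,B̃]‖_{α+γ} } ≤ ε for some ε > 0. Then there is a constant C′ = C′(M, α, γ) > 0, independent of ε, such that for every (i,j,k) ∈ {1,2}³ with (i,j,k) ≠ (1,1,1) the level-3 extensions satisfy ‖Ξ^{3,[ijk]} − Ξ̃^{3,[ijk]}‖_δ ≤ C′ ε, where δ := (6−i−j−k)α + (i+j+k−3)γ. In particular, the extension map (Ξ¹, Ξ², B³) ↦ (Ξ¹, Ξ², Ξ³) is locally Lipschitz continuous from anisotropic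 rough paths of roughness (α,γ) into α-Hölder rough paths over 𝒱. -/

import Mathlib

noncomputable section

open MeasureTheory Finset

/-- Coordinatewise description of a Euclidean vector. -/
def euc {ι : Type*} (f : ι → ℝ) : EuclideanSpace ℝ ι := WithLp.toLp 2 f

/-- Two-parameter `δ`-Hölder bound on `[a,b]` with constant `C`. -/
def HolderBnd2 {E : Type*} [NormedAddCommGroup E] (C δ a b : ℝ) (η : ℝ → ℝ → E) : Prop :=
  ∀ s t : ℝ, a ≤ s → s ≤ t → t ≤ b → ‖η s t‖ ≤ C * (t - s) ^ δ

/-- A partition of the interval `[s,t]`. -/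
structure RSPartition (s t : ℝ) where
  n : ℕ
  pts : ℕ → ℝ
  pos : 0 < n
  first : pts 0 = s
  last : pts n = t
  mono : ∀ i < n, pts i ≤ pts (i + 1)

/-- The mesh of the partition is at most `δ`. -/
def RSPartition.MeshLE {s t : ℝ} (P : RSPartition s t) (δ : ℝ) : Prop :=
  ∀ i < P.n, P.pts (i + 1) - P.pts i ≤ δ

/-- `J` is the limit of the Riemann-type sums of `f` over partitions of `[s,t]`. -/
def RSLimit {E : Type*} [NormedAddCommGroup E] (s t : ℝ)
    (f : ℝ → ℝ → E) (J : E) : Prop :=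
  ∀ ε > 0, ∃ δ > 0, ∀ P : RSPartition s t, P.MeshLE δ →
    ‖(∑ i ∈ Finset.range P.n, f (P.pts i) (P.pts (i + 1))) - J‖ ≤ ε

/-- The simplex `Δ_{[0,T]}` as a subset of `ℝ²`. -/
def simplex (T : ℝ) : Set (ℝ × ℝ) := {p | 0 ≤ p.1 ∧ p.1 ≤ p.2 ∧ p.2 ≤ T}

lemma norm_euc_mul {ι κ : Type*} [Fintype ι] [Fintype κ] (x : ι → ℝ) (y : κ → ℝ) :
    ‖euc (fun p : ι × κ => x p.1 * y p.2)‖ = ‖euc x‖ * ‖euc y‖ := by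
  simp only [EuclideanSpace.norm_eq, euc, PiLp.toLp_apply, Real.norm_eq_abs, sq_abs]
  rw [← Real.sqrt_mul (by positivity)]
  congr 1
  rw [Fintype.sum_mul_sum, Fintype.sum_prod_type]
  apply Finset.sum_congr rfl; intro i _
  apply Finset.sum_congr rfl; intro j _
  ring

lemma norm_euc_mul' {ι κ₁ κ₂ : Type*} [Fintype ι] [Fintype κ₁] [Fintype κ₂]
    (q : ι × κ₁ → ℝ) (c : κ₂ → ℝ) :
    ‖euc (fun p : ι × κ₁ × κ₂ => q (p.1, p.2.1) * c p.2.2)‖ = ‖euc q‖ * ‖euc c‖ := by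
  simp only [EuclideanSpace.norm_eq, euc, PiLp.toLp_apply, Real.norm_eq_abs, sq_abs]
  rw [← Real.sqrt_mul (by positivity)]
  congr 1
  rw [Fintype.sum_mul_sum]
  simp only [Fintype.sum_prod_type]
  apply Finset.sum_congr rfl; intro i _
  apply Finset.sum_congr rfl; intro j _
  apply Finset.sum_congr rfl; intro k _
  ring

lemma rpow_prod_le {x y z p q θ : ℝ} (hx0 : 0 ≤ x) (hxz : x ≤ z) (hy0 : 0 ≤ y) (hyz : y ≤ z)
    (hp : 0 < p) (hq : 0 < q) (hpq : p + q = θ) : x ^ p * y ^ q ≤ z ^ θ := by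
  have hz : 0 ≤ z := le_trans hx0 hxz
  calc x ^ p * y ^ q ≤ z ^ p * z ^ q :=
        mul_le_mul (Real.rpow_le_rpow hx0 hxz hp.le) (Real.rpow_le_rpow hy0 hyz hq.le)
          (Real.rpow_nonneg hy0 q) (Real.rpow_nonneg hz p)
    _ = z ^ θ := by rw [← hpq, Real.rpow_add' hz (by positivity)]
lemma sum_range_two_mul {E : Type*} [AddCommMonoid E] (n : ℕ) (f : ℕ → E) :
    ∑ i ∈ Finset.range (2 * n), f i
      = ∑ i ∈ Finset.range n, (f (2 * i) + f (2 * i + 1)) := by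
  induction n with
  | zero => simp
  | succ n ih =>
    have h : 2 * (n + 1) = (2 * n) + 1 + 1 := by ring
    rw [h, Finset.sum_range_succ, Finset.sum_range_succ, ih, Finset.sum_range_succ, add_assoc]

lemma geom_bound (m : ℕ) (r : ℝ) (hr0 : 0 ≤ r) (hr1 : r < 1) :
    ∑ j ∈ Finset.range m, r ^ j ≤ (1 - r)⁻¹ := by
  rw [geom_sum_eq hr1.ne]
  have h1 : (0:ℝ) < 1 - r := by linarith
  rw [show (r ^ m - 1) / (r - 1) = (1 - r ^ m) / (1 - r) by
    rw [div_eq_div_iff (by linarith) (by linarith)]; ring]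
  rw [inv_eq_one_div]
  apply div_le_div₀ (by norm_num) (by nlinarith [pow_nonneg hr0 m]) h1 le_rfl

lemma sewing {E : Type*} [NormedAddCommGroup E] (θ K : ℝ) (hθ : 1 < θ) (hK : 0 ≤ K)
    (s t : ℝ) (hst : s ≤ t) (g : ℝ → ℝ → E) (J : E)
    (hlim : RSLimit s t g J) (h0 : g s t = 0)
    (hdef : ∀ u v w, s ≤ u → u ≤ v → v ≤ w → w ≤ t →
      ‖g u w - g u v - g v w‖ ≤ K * (w - u) ^ θ) :
    ‖J‖ ≤ (1 - 2 ^ (1 - θ))⁻¹ * K * (t - s) ^ θ := by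
  set r : ℝ := 2 ^ (1 - θ) with hr
  have hr0 : 0 < r := Real.rpow_pos_of_pos (by norm_num) _
  have hr1 : r < 1 := Real.rpow_lt_one_of_one_lt_of_neg (by norm_num) (by linarith)
  have hts : 0 ≤ t - s := by linarith
  set x : ℕ → ℕ → ℝ := fun m i => s + i * ((t - s) / 2 ^ m) with hx
  have hpow : ∀ m : ℕ, (0:ℝ) < 2 ^ m := fun m => by positivity
  have hstep : ∀ m i : ℕ, x m (i + 1) - x m i = (t - s) / 2 ^ m := by
    intro m i; simp only [hx]; push_cast; ring
  have hxs : ∀ m i : ℕ, s ≤ x m i := by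
    intro m i
    have : (0:ℝ) ≤ (i : ℝ) * ((t - s) / 2 ^ m) := by positivity
    simp only [hx]; linarith
  have hxmono : ∀ m i : ℕ, x m i ≤ x m (i + 1) := by
    intro m i
    have h2 : (0:ℝ) ≤ (t - s) / 2 ^ m := by positivity
    simp only [hx]; push_cast; nlinarith
  have hxt : ∀ m : ℕ, x m (2 ^ m) = t := by
    intro m; simp only [hx]; push_cast; field_simp; ring
  have hxle : ∀ m i : ℕ, i ≤ 2 ^ m → x m i ≤ t := by
    intro m i hi
    rw [← hxt m]
    simp only [hx]
    push_cast
    have h3 : (i : ℝ) ≤ (2 : ℝ) ^ m := by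
      have : (i:ℝ) ≤ ((2^m : ℕ) : ℝ) := Nat.cast_le.mpr hi
      push_cast at this; linarith
    have h2 : (0:ℝ) ≤ (t - s) / 2 ^ m := by positivity
    nlinarith
  have hxhalf : ∀ m i : ℕ, x (m + 1) (2 * i) = x m i := by
    intro m i; simp only [hx]; push_cast
    rw [pow_succ]; field_simp
  set S : ℕ → E := fun m => ∑ i ∈ Finset.range (2 ^ m), g (x m i) (x m (i + 1)) with hS
  have hS0 : S 0 = g s t := by
    simp only [hS, pow_zero, Finset.sum_range_one]
    congr 1
    · simp [hx]
    · simpa using hxt 0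
  have key : ∀ m : ℕ, ‖S (m + 1) - S m‖ ≤ K * (t - s) ^ θ * r ^ m := by
    intro m
    have h2 : 2 ^ (m + 1) = 2 * 2 ^ m := by ring
    have hSm1 : S (m + 1) = ∑ i ∈ Finset.range (2 ^ m),
        (g (x (m+1) (2*i)) (x (m+1) (2*i+1)) + g (x (m+1) (2*i+1)) (x (m+1) (2*i+1+1))) := by
      simp only [hS, h2]
      rw [sum_range_two_mul]
    have hdiff : S (m + 1) - S m = ∑ i ∈ Finset.range (2 ^ m),
        ((g (x m i) (x (m+1) (2*i+1)) + g (x (m+1) (2*i+1)) (x m (i+1))) - g (x m i) (x m (i+1))) := by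
      rw [hSm1, hS]
      rw [Finset.sum_sub_distrib]
      congr 1
      apply Finset.sum_congr rfl
      intro i _
      rw [hxhalf m i, show 2*i+1+1 = 2*(i+1) by ring, hxhalf m (i+1)]
    rw [hdiff]
    calc ‖∑ i ∈ Finset.range (2 ^ m), ((g (x m i) (x (m+1) (2*i+1)) + g (x (m+1) (2*i+1)) (x m (i+1))) - g (x m i) (x m (i+1)))‖
        ≤ ∑ i ∈ Finset.range (2 ^ m), ‖(g (x m i) (x (m+1) (2*i+1)) + g (x (m+1) (2*i+1)) (x m (i+1))) - g (x m i) (x m (i+1))‖ :=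
          norm_sum_le _ _
      _ ≤ ∑ i ∈ Finset.range (2 ^ m), K * ((t - s) / 2 ^ m) ^ θ := by
          apply Finset.sum_le_sum
          intro i hi
          rw [Finset.mem_range] at hi
          have hu := hxs m i
          have huv : x m i ≤ x (m+1) (2*i+1) := by
            rw [← hxhalf m i]; exact hxmono (m+1) (2*i)
          have hvw : x (m+1) (2*i+1) ≤ x m (i+1) := by
            rw [← hxhalf m (i+1), show 2*(i+1) = 2*i+1+1 by ring]
            exact hxmono (m+1) (2*i+1)
          have hw : x m (i+1) ≤ t := hxle m (i+1) hi
          have hb := hdef (x m i) (x (m+1) (2*i+1)) (x m (i+1)) hu huv hvw hw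
          have heq : x m (i+1) - x m i = (t - s) / 2 ^ m := hstep m i
          rw [heq] at hb
          calc ‖_ - g (x m i) (x m (i+1))‖ = ‖-(g (x m i) (x m (i+1)) - g (x m i) (x (m+1) (2*i+1)) - g (x (m+1) (2*i+1)) (x m (i+1)))‖ := by
                congr 1; abel
            _ = ‖g (x m i) (x m (i+1)) - g (x m i) (x (m+1) (2*i+1)) - g (x (m+1) (2*i+1)) (x m (i+1))‖ := norm_neg _
            _ ≤ K * ((t - s) / 2 ^ m) ^ θ := hb
      _ = (2:ℝ) ^ m * (K * ((t - s) / 2 ^ m) ^ θ) := by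
          rw [Finset.sum_const, Finset.card_range]; push_cast; ring
      _ = K * (t - s) ^ θ * r ^ m := by
          rw [Real.div_rpow hts (by positivity)]
          rw [hr, ← Real.rpow_natCast ((2:ℝ) ^ (1 - θ)) m, ← Real.rpow_mul (by norm_num : (0:ℝ) ≤ 2)]
          rw [← Real.rpow_natCast (2:ℝ) m, ← Real.rpow_mul (by norm_num : (0:ℝ) ≤ 2)]
          rw [div_eq_mul_inv, ← Real.rpow_neg (by positivity)]
          rw [show (2:ℝ) ^ (m:ℝ) * (K * ((t-s)^θ * (2:ℝ) ^ (-((m:ℝ) * θ)))) = K * (t-s)^θ * ((2:ℝ) ^ (m:ℝ) * (2:ℝ) ^ (-((m:ℝ) * θ))) by ring]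
          rw [← Real.rpow_add (by norm_num : (0:ℝ) < 2)]
          congr 2
          ring
  have htel : ∀ m : ℕ, ‖S m‖ ≤ K * (t - s) ^ θ * (1 - r)⁻¹ := by
    intro m
    have h1 : S m = ∑ j ∈ Finset.range m, (S (j + 1) - S j) := by
      rw [Finset.sum_range_sub S m, hS0, h0, sub_zero]
    calc ‖S m‖ = ‖∑ j ∈ Finset.range m, (S (j + 1) - S j)‖ := by rw [← h1]
      _ ≤ ∑ j ∈ Finset.range m, ‖S (j + 1) - S j‖ := norm_sum_le _ _
      _ ≤ ∑ j ∈ Finset.range m, K * (t - s) ^ θ * r ^ j := Finset.sum_le_sum (fun j _ => key j)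
      _ = K * (t - s) ^ θ * ∑ j ∈ Finset.range m, r ^ j := by rw [Finset.mul_sum]
      _ ≤ K * (t - s) ^ θ * (1 - r)⁻¹ := by
          apply mul_le_mul_of_nonneg_left (geom_bound m r hr0.le hr1)
          positivity
  apply le_of_forall_pos_le_add
  intro ε hε
  obtain ⟨δ, hδ, hPa⟩ := hlim ε hε
  obtain ⟨m, hm⟩ : ∃ m : ℕ, (t - s) / 2 ^ m ≤ δ := by
    obtain ⟨m, hm⟩ := pow_unbounded_of_one_lt ((t - s) / δ) (by norm_num : (1:ℝ) < 2)
    refine ⟨m, ?_⟩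
    rw [div_le_iff₀ (hpow m)]
    rw [div_lt_iff₀ hδ] at hm
    nlinarith
  set P : RSPartition s t := ⟨2 ^ m, x m, Nat.pow_pos (by norm_num), by simp [hx], hxt m, fun i _ => hxmono m i⟩ with hP
  have hmesh : P.MeshLE δ := by
    intro i _
    show x m (i + 1) - x m i ≤ δ
    rw [hstep m i]; exact hm
  have hclose : ‖S m - J‖ ≤ ε := hPa P hmesh
  calc ‖J‖ = ‖S m - (S m - J)‖ := by congr 1; abel
    _ ≤ ‖S m‖ + ‖S m - J‖ := norm_sub_le _ _
    _ ≤ K * (t - s) ^ θ * (1 - r)⁻¹ + ε := add_le_add (htel m) hclose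
    _ = (1 - r)⁻¹ * K * (t - s) ^ θ + ε := by ring
lemma RSLimit.sub' {E : Type*} [NormedAddCommGroup E] {s t : ℝ} {f f' : ℝ → ℝ → E} {J J' : E}
    (h1 : RSLimit s t f J) (h2 : RSLimit s t f' J') :
    RSLimit s t (fun u v => f u v - f' u v) (J - J') := by
  intro ε hε
  obtain ⟨δ1, hδ1, h1'⟩ := h1 (ε/2) (by linarith)
  obtain ⟨δ2, hδ2, h2'⟩ := h2 (ε/2) (by linarith)
  refine ⟨min δ1 δ2, lt_min hδ1 hδ2, fun P hP => ?_⟩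
  have hm1 : P.MeshLE δ1 := fun i hi => le_trans (hP i hi) (min_le_left _ _)
  have hm2 : P.MeshLE δ2 := fun i hi => le_trans (hP i hi) (min_le_right _ _)
  have e1 := h1' P hm1
  have e2 := h2' P hm2
  rw [Finset.sum_sub_distrib]
  calc ‖(∑ i ∈ Finset.range P.n, f (P.pts i) (P.pts (i+1))) - ∑ i ∈ Finset.range P.n, f' (P.pts i) (P.pts (i+1)) - (J - J')‖
      = ‖((∑ i ∈ Finset.range P.n, f (P.pts i) (P.pts (i+1))) - J) - ((∑ i ∈ Finset.range P.n, f' (P.pts i) (P.pts (i+1))) - J')‖ := by congr 1; abel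
    _ ≤ _ := norm_sub_le _ _
    _ ≤ ε/2 + ε/2 := add_le_add e1 e2
    _ = ε := by ring

lemma euc_id {ι : Type*} (z : EuclideanSpace ℝ ι) : euc (fun i => z i) = z := WithLp.toLp_ofLp (p := 2) z

lemma norm4_le {E : Type*} [NormedAddCommGroup E] (a b c d : E) :
    ‖-a - b - c - d‖ ≤ ‖a‖ + ‖b‖ + ‖c‖ + ‖d‖ := by
  have h : -a - b - c - d = -(a + b + c + d) := by abel
  rw [h, norm_neg]
  calc ‖a+b+c+d‖ ≤ ‖a+b+c‖ + ‖d‖ := norm_add_le _ _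
    _ ≤ ‖a+b‖+‖c‖+‖d‖ := by gcongr; exact norm_add_le _ _
    _ ≤ ‖a‖+‖b‖+‖c‖+‖d‖ := by gcongr; exact norm_add_le _ _

lemma case_bound {ι κ₁ κ₂ : Type*} [Fintype ι] [Fintype κ₁] [Fintype κ₂]
    {T M ε a c θ : ℝ} (hM : 0 < M) (hε : 0 < ε)
    (ha : 0 < a) (hc : 0 < c) (hacθ : a + c ≤ θ) (hθ : 1 < θ)
    (A At : ℝ → ℝ → EuclideanSpace ℝ ι)
    (B' Bt' : ℝ → ℝ → EuclideanSpace ℝ κ₁)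
    (C Ct : ℝ → ℝ → EuclideanSpace ℝ κ₂)
    (P Pt : ℝ → ℝ → EuclideanSpace ℝ (κ₁ × κ₂))
    (Q Qt : ℝ → ℝ → EuclideanSpace ℝ (ι × κ₁))
    (X Xt : ℝ → ℝ → EuclideanSpace ℝ (ι × κ₁ × κ₂))
    (hA : HolderBnd2 M a 0 T A) (hP : HolderBnd2 M (θ - a) 0 T P)
    (hQ : HolderBnd2 M (θ - c) 0 T Q) (hC : HolderBnd2 M c 0 T C)
    (hAt : HolderBnd2 M a 0 T At) (hPt : HolderBnd2 M (θ - a) 0 T Pt)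
    (hQt : HolderBnd2 M (θ - c) 0 T Qt) (hCt : HolderBnd2 M c 0 T Ct)
    (hdA : HolderBnd2 ε a 0 T (fun s t => A s t - At s t))
    (hdP : HolderBnd2 ε (θ - a) 0 T (fun s t => P s t - Pt s t))
    (hdQ : HolderBnd2 ε (θ - c) 0 T (fun s t => Q s t - Qt s t))
    (hdC : HolderBnd2 ε c 0 T (fun s t => C s t - Ct s t))
    (chenA : ∀ s u t : ℝ, 0 ≤ s → s ≤ u → u ≤ t → t ≤ T → A s t = A s u + A u t)
    (chenC : ∀ s u t : ℝ, 0 ≤ s → s ≤ u → u ≤ t → t ≤ T → C s t = C s u + C u t)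
    (chenP : ∀ s u t : ℝ, 0 ≤ s → s ≤ u → u ≤ t → t ≤ T →
      P s t = P s u + P u t + euc (fun r => B' s u r.1 * C u t r.2))
    (chenQ : ∀ s u t : ℝ, 0 ≤ s → s ≤ u → u ≤ t → t ≤ T →
      Q s t = Q s u + Q u t + euc (fun r => A s u r.1 * B' u t r.2))
    (chenAt : ∀ s u t : ℝ, 0 ≤ s → s ≤ u → u ≤ t → t ≤ T → At s t = At s u + At u t)
    (chenCt : ∀ s u t : ℝ, 0 ≤ s → s ≤ u → u ≤ t → t ≤ T → Ct s t = Ct s u + Ct u t)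
    (chenPt : ∀ s u t : ℝ, 0 ≤ s → s ≤ u → u ≤ t → t ≤ T →
      Pt s t = Pt s u + Pt u t + euc (fun r => Bt' s u r.1 * Ct u t r.2))
    (chenQt : ∀ s u t : ℝ, 0 ≤ s → s ≤ u → u ≤ t → t ≤ T →
      Qt s t = Qt s u + Qt u t + euc (fun r => At s u r.1 * Bt' u t r.2))
    (hX : ∀ s t, 0 ≤ s → s ≤ t → t ≤ T → RSLimit s t
      (fun u v => euc fun p : ι × κ₁ × κ₂ =>
        A s u p.1 * P u v (p.2.1, p.2.2) + Q s u (p.1, p.2.1) * C u v p.2.2) (X s t))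
    (hXt : ∀ s t, 0 ≤ s → s ≤ t → t ≤ T → RSLimit s t
      (fun u v => euc fun p : ι × κ₁ × κ₂ =>
        At s u p.1 * Pt u v (p.2.1, p.2.2) + Qt s u (p.1, p.2.1) * Ct u v p.2.2) (Xt s t)) :
    HolderBnd2 ((1 - 2 ^ (1 - θ))⁻¹ * (4 * M) * ε) θ 0 T (fun s t => X s t - Xt s t) := by
  intro s t hs0 hst htT
  have hsT : s ≤ T := le_trans hst htT
  have hθa : 0 < θ - a := by linarith
  have hθc : 0 < θ - c := by linarith
  -- the integrand difference
  set g : ℝ → ℝ → EuclideanSpace ℝ (ι × κ₁ × κ₂) := fun u v =>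
    (euc fun p : ι × κ₁ × κ₂ =>
        A s u p.1 * P u v (p.2.1, p.2.2) + Q s u (p.1, p.2.1) * C u v p.2.2)
    - (euc fun p : ι × κ₁ × κ₂ =>
        At s u p.1 * Pt u v (p.2.1, p.2.2) + Qt s u (p.1, p.2.1) * Ct u v p.2.2) with hg
  have hlim : RSLimit s t g (X s t - Xt s t) :=
    RSLimit.sub' (hX s t hs0 hst htT) (hXt s t hs0 hst htT)
  -- vanishing at the diagonal first argument
  have hAss : A s s = 0 := by
    have := hA s s hs0 le_rfl hsT
    rw [sub_self, Real.zero_rpow (ne_of_gt ha), mul_zero] at this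
    exact norm_le_zero_iff.mp this
  have hQss : Q s s = 0 := by
    have := hQ s s hs0 le_rfl hsT
    rw [sub_self, Real.zero_rpow (ne_of_gt hθc), mul_zero] at this
    exact norm_le_zero_iff.mp this
  have hAtss : At s s = 0 := by
    have := hAt s s hs0 le_rfl hsT
    rw [sub_self, Real.zero_rpow (ne_of_gt ha), mul_zero] at this
    exact norm_le_zero_iff.mp this
  have hQtss : Qt s s = 0 := by
    have := hQt s s hs0 le_rfl hsT
    rw [sub_self, Real.zero_rpow (ne_of_gt hθc), mul_zero] at this
    exact norm_le_zero_iff.mp this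
  have h0 : g s t = 0 := by
    rw [hg]
    ext p
    have e1 : A s s p.1 = 0 := by rw [hAss]; rfl
    have e2 : Q s s (p.1, p.2.1) = 0 := by rw [hQss]; rfl
    have e3 : At s s p.1 = 0 := by rw [hAtss]; rfl
    have e4 : Qt s s (p.1, p.2.1) = 0 := by rw [hQtss]; rfl
    simp only [euc, PiLp.toLp_apply, PiLp.sub_apply, e1, e2, e3, e4, zero_mul, add_zero, sub_zero, PiLp.zero_apply]
  -- defect bound
  have hdef : ∀ u v w, s ≤ u → u ≤ v → v ≤ w → w ≤ t →
      ‖g u w - g u v - g v w‖ ≤ 4 * M * ε * (w - u) ^ θ := by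
    intro u v w hsu huv hvw hwt
    have h0u : 0 ≤ u := le_trans hs0 hsu
    have h0v : 0 ≤ v := le_trans h0u huv
    have hwT : w ≤ T := le_trans hwt htT
    have hvT : v ≤ T := le_trans hvw hwT
    have huT : u ≤ T := le_trans huv hvT
    have huw : u ≤ w := le_trans huv hvw
    -- defect identity
    have hid : g u w - g u v - g v w =
        -(euc fun p : ι × κ₁ × κ₂ => (A u v - At u v) p.1 * P v w p.2)
        - (euc fun p : ι × κ₁ × κ₂ => At u v p.1 * (P v w - Pt v w) p.2)
        - (euc fun p : ι × κ₁ × κ₂ => (Q u v - Qt u v) (p.1, p.2.1) * C v w p.2.2)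
        - (euc fun p : ι × κ₁ × κ₂ => Qt u v (p.1, p.2.1) * (C v w - Ct v w) p.2.2) := by
      have hA1 : ∀ i, A s v i = A s u i + A u v i :=
        fun i => by rw [chenA s u v hs0 hsu huv hvT]; rfl
      have hC1 : ∀ k, C u w k = C u v k + C v w k :=
        fun k => by rw [chenC u v w h0u huv hvw hwT]; rfl
      have hP1 : ∀ r : κ₁ × κ₂, P u w r = P u v r + P v w r + B' u v r.1 * C v w r.2 :=
        fun r => by rw [chenP u v w h0u huv hvw hwT]; simp [euc]
      have hQ1 : ∀ r : ι × κ₁, Q s v r = Q s u r + Q u v r + A s u r.1 * B' u v r.2 :=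
        fun r => by rw [chenQ s u v hs0 hsu huv hvT]; simp [euc]
      have hAt1 : ∀ i, At s v i = At s u i + At u v i :=
        fun i => by rw [chenAt s u v hs0 hsu huv hvT]; rfl
      have hCt1 : ∀ k, Ct u w k = Ct u v k + Ct v w k :=
        fun k => by rw [chenCt u v w h0u huv hvw hwT]; rfl
      have hPt1 : ∀ r : κ₁ × κ₂, Pt u w r = Pt u v r + Pt v w r + Bt' u v r.1 * Ct v w r.2 :=
        fun r => by rw [chenPt u v w h0u huv hvw hwT]; simp [euc]
      have hQt1 : ∀ r : ι × κ₁, Qt s v r = Qt s u r + Qt u v r + At s u r.1 * Bt' u v r.2 :=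
        fun r => by rw [chenQt s u v hs0 hsu huv hvT]; simp [euc]
      rw [hg]
      ext p
      simp only [euc, PiLp.toLp_apply, PiLp.sub_apply, PiLp.neg_apply, Prod.mk.eta]
      linear_combination (A s u p.1) * hP1 p.2 + (Q s u (p.1, p.2.1)) * hC1 p.2.2
        - (P v w p.2) * hA1 p.1 - (C v w p.2.2) * hQ1 (p.1, p.2.1)
        - (At s u p.1) * hPt1 p.2 - (Qt s u (p.1, p.2.1)) * hCt1 p.2.2
        + (Pt v w p.2) * hAt1 p.1 + (Ct v w p.2.2) * hQt1 (p.1, p.2.1)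
    rw [hid]
    have bound1 : ‖euc fun p : ι × κ₁ × κ₂ => (A u v - At u v) p.1 * P v w p.2‖
        ≤ M * ε * (w - u) ^ θ := by
      rw [norm_euc_mul (fun i => (A u v - At u v) i) (fun r => P v w r), euc_id, euc_id]
      calc ‖A u v - At u v‖ * ‖P v w‖ ≤ (ε * (v - u) ^ a) * (M * (w - v) ^ (θ - a)) := by
            apply mul_le_mul (hdA u v h0u huv hvT) (hP v w h0v hvw hwT) (norm_nonneg _)
              (mul_nonneg (by positivity) (Real.rpow_nonneg (by linarith) _))
        _ = M * ε * ((v - u) ^ a * (w - v) ^ (θ - a)) := by ring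
        _ ≤ M * ε * (w - u) ^ θ := by
            apply mul_le_mul_of_nonneg_left _ (by positivity)
            exact rpow_prod_le (by linarith) (by linarith) (by linarith) (by linarith)
              ha hθa (by ring)
    have bound2 : ‖euc fun p : ι × κ₁ × κ₂ => At u v p.1 * (P v w - Pt v w) p.2‖
        ≤ M * ε * (w - u) ^ θ := by
      rw [norm_euc_mul (fun i => At u v i) (fun r => (P v w - Pt v w) r), euc_id, euc_id]
      calc ‖At u v‖ * ‖P v w - Pt v w‖ ≤ (M * (v - u) ^ a) * (ε * (w - v) ^ (θ - a)) := by
            apply mul_le_mul (hAt u v h0u huv hvT) (hdP v w h0v hvw hwT) (norm_nonneg _)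
              (mul_nonneg (by positivity) (Real.rpow_nonneg (by linarith) _))
        _ = M * ε * ((v - u) ^ a * (w - v) ^ (θ - a)) := by ring
        _ ≤ M * ε * (w - u) ^ θ := by
            apply mul_le_mul_of_nonneg_left _ (by positivity)
            exact rpow_prod_le (by linarith) (by linarith) (by linarith) (by linarith)
              ha hθa (by ring)
    have bound3 : ‖euc fun p : ι × κ₁ × κ₂ => (Q u v - Qt u v) (p.1, p.2.1) * C v w p.2.2‖
        ≤ M * ε * (w - u) ^ θ := by
      rw [norm_euc_mul' (fun r => (Q u v - Qt u v) r) (fun k => C v w k), euc_id, euc_id]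
      calc ‖Q u v - Qt u v‖ * ‖C v w‖ ≤ (ε * (v - u) ^ (θ - c)) * (M * (w - v) ^ c) := by
            apply mul_le_mul (hdQ u v h0u huv hvT) (hC v w h0v hvw hwT) (norm_nonneg _)
              (mul_nonneg (by positivity) (Real.rpow_nonneg (by linarith) _))
        _ = M * ε * ((v - u) ^ (θ - c) * (w - v) ^ c) := by ring
        _ ≤ M * ε * (w - u) ^ θ := by
            apply mul_le_mul_of_nonneg_left _ (by positivity)
            exact rpow_prod_le (by linarith) (by linarith) (by linarith) (by linarith)
              hθc hc (by ring)
    have bound4 : ‖euc fun p : ι × κ₁ × κ₂ => Qt u v (p.1, p.2.1) * (C v w - Ct v w) p.2.2‖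
        ≤ M * ε * (w - u) ^ θ := by
      rw [norm_euc_mul' (fun r => Qt u v r) (fun k => (C v w - Ct v w) k), euc_id, euc_id]
      calc ‖Qt u v‖ * ‖C v w - Ct v w‖ ≤ (M * (v - u) ^ (θ - c)) * (ε * (w - v) ^ c) := by
            apply mul_le_mul (hQt u v h0u huv hvT) (hdC v w h0v hvw hwT) (norm_nonneg _)
              (mul_nonneg (by positivity) (Real.rpow_nonneg (by linarith) _))
        _ = M * ε * ((v - u) ^ (θ - c) * (w - v) ^ c) := by ring
        _ ≤ M * ε * (w - u) ^ θ := by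
            apply mul_le_mul_of_nonneg_left _ (by positivity)
            exact rpow_prod_le (by linarith) (by linarith) (by linarith) (by linarith)
              hθc hc (by ring)
    calc ‖_ - _ - _ - _‖ ≤ _ := norm4_le _ _ _ _
      _ ≤ M * ε * (w - u) ^ θ + M * ε * (w - u) ^ θ + M * ε * (w - u) ^ θ + M * ε * (w - u) ^ θ :=
          add_le_add (add_le_add (add_le_add bound1 bound2) bound3) bound4
      _ = 4 * M * ε * (w - u) ^ θ := by ring
  have := sewing θ (4 * M * ε) hθ (by positivity) s t hst g (X s t - Xt s t) hlim h0 hdef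
  calc ‖X s t - Xt s t‖ ≤ (1 - 2 ^ (1 - θ))⁻¹ * (4 * M * ε) * (t - s) ^ θ := this
    _ = (1 - 2 ^ (1 - θ))⁻¹ * (4 * M) * ε * (t - s) ^ θ := by ring

lemma HolderBnd2.congr_exp {E : Type*} [NormedAddCommGroup E] {C δ δ' a b : ℝ}
    {η : ℝ → ℝ → E} (h : HolderBnd2 C δ a b η) (h' : δ = δ') : HolderBnd2 C δ' a b η :=
  h' ▸ h

lemma HolderBnd2.weaken {E : Type*} [NormedAddCommGroup E] {C1 C2 δ a b : ℝ}
    {η : ℝ → ℝ → E} (h : HolderBnd2 C1 δ a b η) (hC : C1 ≤ C2) : HolderBnd2 C2 δ a b η :=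
  fun s t h1 h2 h3 => (h s t h1 h2 h3).trans
    (mul_le_mul_of_nonneg_right hC (Real.rpow_nonneg (by linarith) _))

/-- local Lipschitz continuity of the level-3 extension map on
anisotropic rough paths of roughness `(α,γ)`. -/
theorem statement11 (α γ : ℝ) (hα1 : 1/4 < α) (hα2 : α ≤ 1/3)
    (hγ1 : 1/3 < γ) (hγ2 : γ ≤ 1/2) (hαγ : 1 < 2 * α + γ)
    (M : ℝ) (hM : 0 < M) :
    ∃ C' > (0:ℝ),
      ∀ (d e : ℕ) (T : ℝ), 0 < T →
      ∀ (B1 Bt1 : ℝ → ℝ → EuclideanSpace ℝ (Fin d))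
        (W1 Wt1 : ℝ → ℝ → EuclideanSpace ℝ (Fin e))
        (B2 Bt2 : ℝ → ℝ → EuclideanSpace ℝ (Fin d × Fin d))
        (W2 Wt2 : ℝ → ℝ → EuclideanSpace ℝ (Fin e × Fin e))
        (IBW ItBW : ℝ → ℝ → EuclideanSpace ℝ (Fin d × Fin e))
        (IWB ItWB : ℝ → ℝ → EuclideanSpace ℝ (Fin e × Fin d))
        (B3 Bt3 : ℝ → ℝ → EuclideanSpace ℝ (Fin d × Fin d × Fin d)),
        -- continuity
        ContinuousOn (fun p : ℝ × ℝ => B1 p.1 p.2) (simplex T) →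
        ContinuousOn (fun p : ℝ × ℝ => W1 p.1 p.2) (simplex T) →
        ContinuousOn (fun p : ℝ × ℝ => B2 p.1 p.2) (simplex T) →
        ContinuousOn (fun p : ℝ × ℝ => W2 p.1 p.2) (simplex T) →
        ContinuousOn (fun p : ℝ × ℝ => IBW p.1 p.2) (simplex T) →
        ContinuousOn (fun p : ℝ × ℝ => IWB p.1 p.2) (simplex T) →
        ContinuousOn (fun p : ℝ × ℝ => B3 p.1 p.2) (simplex T) →
        ContinuousOn (fun p : ℝ × ℝ => Bt1 p.1 p.2) (simplex T) →
        ContinuousOn (fun p : ℝ × ℝ => Wt1 p.1 p.2) (simplex T) →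
        ContinuousOn (fun p : ℝ × ℝ => Bt2 p.1 p.2) (simplex T) →
        ContinuousOn (fun p : ℝ × ℝ => Wt2 p.1 p.2) (simplex T) →
        ContinuousOn (fun p : ℝ × ℝ => ItBW p.1 p.2) (simplex T) →
        ContinuousOn (fun p : ℝ × ℝ => ItWB p.1 p.2) (simplex T) →
        ContinuousOn (fun p : ℝ × ℝ => Bt3 p.1 p.2) (simplex T) →
        -- common Hölder bound `M` for both anisotropic rough paths
        HolderBnd2 M α 0 T B1 → HolderBnd2 M (2 * α) 0 T B2 →
        HolderBnd2 M (3 * α) 0 T B3 → HolderBnd2 M γ 0 T W1 →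
        HolderBnd2 M (2 * γ) 0 T W2 → HolderBnd2 M (α + γ) 0 T IBW →
        HolderBnd2 M (α + γ) 0 T IWB →
        HolderBnd2 M α 0 T Bt1 → HolderBnd2 M (2 * α) 0 T Bt2 →
        HolderBnd2 M (3 * α) 0 T Bt3 → HolderBnd2 M γ 0 T Wt1 →
        HolderBnd2 M (2 * γ) 0 T Wt2 → HolderBnd2 M (α + γ) 0 T ItBW →
        HolderBnd2 M (α + γ) 0 T ItWB →
        -- Chen's relations for both paths
        (∀ s u t, 0 ≤ s → s ≤ u → u ≤ t → t ≤ T →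
          B1 s t = B1 s u + B1 u t ∧ W1 s t = W1 s u + W1 u t ∧
          B2 s t = B2 s u + B2 u t + (euc fun p => B1 s u p.1 * B1 u t p.2) ∧
          W2 s t = W2 s u + W2 u t + (euc fun p => W1 s u p.1 * W1 u t p.2) ∧
          IBW s t = IBW s u + IBW u t + (euc fun p => B1 s u p.1 * W1 u t p.2) ∧
          IWB s t = IWB s u + IWB u t + (euc fun p => W1 s u p.1 * B1 u t p.2) ∧
          B3 s t = B3 s u + B3 u t + (euc fun p => B1 s u p.1 * B2 u t (p.2.1, p.2.2))
            + (euc fun p => B2 s u (p.1, p.2.1) * B1 u t p.2.2)) →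
        (∀ s u t, 0 ≤ s → s ≤ u → u ≤ t → t ≤ T →
          Bt1 s t = Bt1 s u + Bt1 u t ∧ Wt1 s t = Wt1 s u + Wt1 u t ∧
          Bt2 s t = Bt2 s u + Bt2 u t + (euc fun p => Bt1 s u p.1 * Bt1 u t p.2) ∧
          Wt2 s t = Wt2 s u + Wt2 u t + (euc fun p => Wt1 s u p.1 * Wt1 u t p.2) ∧
          ItBW s t = ItBW s u + ItBW u t + (euc fun p => Bt1 s u p.1 * Wt1 u t p.2) ∧
          ItWB s t = ItWB s u + ItWB u t + (euc fun p => Wt1 s u p.1 * Bt1 u t p.2) ∧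
          Bt3 s t = Bt3 s u + Bt3 u t
            + (euc fun p => Bt1 s u p.1 * Bt2 u t (p.2.1, p.2.2))
            + (euc fun p => Bt2 s u (p.1, p.2.1) * Bt1 u t p.2.2)) →
        -- the level-3 extensions of the two paths (limits of Riemann-type sums)
        ∀ (X112 Xt112 : ℝ → ℝ → EuclideanSpace ℝ (Fin d × Fin d × Fin e))
          (X121 Xt121 : ℝ → ℝ → EuclideanSpace ℝ (Fin d × Fin e × Fin d))
          (X211 Xt211 : ℝ → ℝ → EuclideanSpace ℝ (Fin e × Fin d × Fin d))
          (X122 Xt122 : ℝ → ℝ → EuclideanSpace ℝ (Fin d × Fin e × Fin e))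
          (X212 Xt212 : ℝ → ℝ → EuclideanSpace ℝ (Fin e × Fin d × Fin e))
          (X221 Xt221 : ℝ → ℝ → EuclideanSpace ℝ (Fin e × Fin e × Fin d))
          (X222 Xt222 : ℝ → ℝ → EuclideanSpace ℝ (Fin e × Fin e × Fin e)),
          (∀ s t, 0 ≤ s → s ≤ t → t ≤ T →
            RSLimit s t (fun u v => euc fun p : Fin d × Fin d × Fin e =>
              B1 s u p.1 * IBW u v (p.2.1, p.2.2) + B2 s u (p.1, p.2.1) * W1 u v p.2.2)
              (X112 s t) ∧
            RSLimit s t (fun u v => euc fun p : Fin d × Fin e × Fin d =>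
              B1 s u p.1 * IWB u v (p.2.1, p.2.2) + IBW s u (p.1, p.2.1) * B1 u v p.2.2)
              (X121 s t) ∧
            RSLimit s t (fun u v => euc fun p : Fin e × Fin d × Fin d =>
              W1 s u p.1 * B2 u v (p.2.1, p.2.2) + IWB s u (p.1, p.2.1) * B1 u v p.2.2)
              (X211 s t) ∧
            RSLimit s t (fun u v => euc fun p : Fin d × Fin e × Fin e =>
              B1 s u p.1 * W2 u v (p.2.1, p.2.2) + IBW s u (p.1, p.2.1) * W1 u v p.2.2)
              (X122 s t) ∧
            RSLimit s t (fun u v => euc fun p : Fin e × Fin d × Fin e =>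
              W1 s u p.1 * IBW u v (p.2.1, p.2.2) + IWB s u (p.1, p.2.1) * W1 u v p.2.2)
              (X212 s t) ∧
            RSLimit s t (fun u v => euc fun p : Fin e × Fin e × Fin d =>
              W1 s u p.1 * IWB u v (p.2.1, p.2.2) + W2 s u (p.1, p.2.1) * B1 u v p.2.2)
              (X221 s t) ∧
            RSLimit s t (fun u v => euc fun p : Fin e × Fin e × Fin e =>
              W1 s u p.1 * W2 u v (p.2.1, p.2.2) + W2 s u (p.1, p.2.1) * W1 u v p.2.2)
              (X222 s t)) →
          (∀ s t, 0 ≤ s → s ≤ t → t ≤ T →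
            RSLimit s t (fun u v => euc fun p : Fin d × Fin d × Fin e =>
              Bt1 s u p.1 * ItBW u v (p.2.1, p.2.2)
                + Bt2 s u (p.1, p.2.1) * Wt1 u v p.2.2) (Xt112 s t) ∧
            RSLimit s t (fun u v => euc fun p : Fin d × Fin e × Fin d =>
              Bt1 s u p.1 * ItWB u v (p.2.1, p.2.2)
                + ItBW s u (p.1, p.2.1) * Bt1 u v p.2.2) (Xt121 s t) ∧
            RSLimit s t (fun u v => euc fun p : Fin e × Fin d × Fin d =>
              Wt1 s u p.1 * Bt2 u v (p.2.1, p.2.2)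
                + ItWB s u (p.1, p.2.1) * Bt1 u v p.2.2) (Xt211 s t) ∧
            RSLimit s t (fun u v => euc fun p : Fin d × Fin e × Fin e =>
              Bt1 s u p.1 * Wt2 u v (p.2.1, p.2.2)
                + ItBW s u (p.1, p.2.1) * Wt1 u v p.2.2) (Xt122 s t) ∧
            RSLimit s t (fun u v => euc fun p : Fin e × Fin d × Fin e =>
              Wt1 s u p.1 * ItBW u v (p.2.1, p.2.2)
                + ItWB s u (p.1, p.2.1) * Wt1 u v p.2.2) (Xt212 s t) ∧
            RSLimit s t (fun u v => euc fun p : Fin e × Fin e × Fin d =>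
              Wt1 s u p.1 * ItWB u v (p.2.1, p.2.2)
                + Wt2 s u (p.1, p.2.1) * Bt1 u v p.2.2) (Xt221 s t) ∧
            RSLimit s t (fun u v => euc fun p : Fin e × Fin e × Fin e =>
              Wt1 s u p.1 * Wt2 u v (p.2.1, p.2.2)
                + Wt2 s u (p.1, p.2.1) * Wt1 u v p.2.2) (Xt222 s t)) →
          -- the two paths are `ε`-close
          ∀ ε : ℝ, 0 < ε →
            HolderBnd2 ε α 0 T (fun s t => B1 s t - Bt1 s t) →
            HolderBnd2 ε (2 * α) 0 T (fun s t => B2 s t - Bt2 s t) →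
            HolderBnd2 ε (3 * α) 0 T (fun s t => B3 s t - Bt3 s t) →
            HolderBnd2 ε γ 0 T (fun s t => W1 s t - Wt1 s t) →
            HolderBnd2 ε (2 * γ) 0 T (fun s t => W2 s t - Wt2 s t) →
            HolderBnd2 ε (α + γ) 0 T (fun s t => IBW s t - ItBW s t) →
            HolderBnd2 ε (α + γ) 0 T (fun s t => IWB s t - ItWB s t) →
            -- conclusion: `‖Ξ^{3,[ijk]} - Ξ̃^{3,[ijk]}‖_δ ≤ C′ ε`
            HolderBnd2 (C' * ε) (2 * α + γ) 0 T (fun s t => X112 s t - Xt112 s t) ∧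
            HolderBnd2 (C' * ε) (2 * α + γ) 0 T (fun s t => X121 s t - Xt121 s t) ∧
            HolderBnd2 (C' * ε) (2 * α + γ) 0 T (fun s t => X211 s t - Xt211 s t) ∧
            HolderBnd2 (C' * ε) (α + 2 * γ) 0 T (fun s t => X122 s t - Xt122 s t) ∧
            HolderBnd2 (C' * ε) (α + 2 * γ) 0 T (fun s t => X212 s t - Xt212 s t) ∧
            HolderBnd2 (C' * ε) (α + 2 * γ) 0 T (fun s t => X221 s t - Xt221 s t) ∧
            HolderBnd2 (C' * ε) (3 * γ) 0 T (fun s t => X222 s t - Xt222 s t) := by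
  have hα0 : 0 < α := by linarith
  have hγ0 : 0 < γ := by linarith
  have hαγ' : α < γ := by linarith
  have hθ2 : 1 < α + 2 * γ := by linarith
  have hθ3 : 1 < 3 * γ := by linarith
  have hr1 : (2:ℝ) ^ (1 - (2 * α + γ)) < 1 :=
    Real.rpow_lt_one_of_one_lt_of_neg (by norm_num) (by linarith)
  have hr0 : (0:ℝ) < 1 - 2 ^ (1 - (2 * α + γ)) := by linarith
  refine ⟨(1 - 2 ^ (1 - (2 * α + γ)))⁻¹ * (4 * M), by positivity, ?_⟩
  intro d e T hT B1 Bt1 W1 Wt1 B2 Bt2 W2 Wt2 IBW ItBW IWB ItWB B3 Bt3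
  intro _ _ _ _ _ _ _ _ _ _ _ _ _ _
  intro hB1 hB2 hB3 hW1 hW2 hIBW hIWB hBt1 hBt2 hBt3 hWt1 hWt2 hItBW hItWB
  intro chen chent
  intro X112 Xt112 X121 Xt121 X211 Xt211 X122 Xt122 X212 Xt212 X221 Xt221 X222 Xt222
  intro hlim hlimt ε hε hdB1 hdB2 hdB3 hdW1 hdW2 hdIBW hdIWB
  have cB1 := fun s u t h1 h2 h3 h4 => (chen s u t h1 h2 h3 h4).1
  have cW1 := fun s u t h1 h2 h3 h4 => (chen s u t h1 h2 h3 h4).2.1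
  have cB2 := fun s u t h1 h2 h3 h4 => (chen s u t h1 h2 h3 h4).2.2.1
  have cW2 := fun s u t h1 h2 h3 h4 => (chen s u t h1 h2 h3 h4).2.2.2.1
  have cIBW := fun s u t h1 h2 h3 h4 => (chen s u t h1 h2 h3 h4).2.2.2.2.1
  have cIWB := fun s u t h1 h2 h3 h4 => (chen s u t h1 h2 h3 h4).2.2.2.2.2.1
  have ctB1 := fun s u t h1 h2 h3 h4 => (chent s u t h1 h2 h3 h4).1
  have ctW1 := fun s u t h1 h2 h3 h4 => (chent s u t h1 h2 h3 h4).2.1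
  have ctB2 := fun s u t h1 h2 h3 h4 => (chent s u t h1 h2 h3 h4).2.2.1
  have ctW2 := fun s u t h1 h2 h3 h4 => (chent s u t h1 h2 h3 h4).2.2.2.1
  have ctIBW := fun s u t h1 h2 h3 h4 => (chent s u t h1 h2 h3 h4).2.2.2.2.1
  have ctIWB := fun s u t h1 h2 h3 h4 => (chent s u t h1 h2 h3 h4).2.2.2.2.2.1
  have l112 := fun s t h1 h2 h3 => (hlim s t h1 h2 h3).1
  have l121 := fun s t h1 h2 h3 => (hlim s t h1 h2 h3).2.1
  have l211 := fun s t h1 h2 h3 => (hlim s t h1 h2 h3).2.2.1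
  have l122 := fun s t h1 h2 h3 => (hlim s t h1 h2 h3).2.2.2.1
  have l212 := fun s t h1 h2 h3 => (hlim s t h1 h2 h3).2.2.2.2.1
  have l221 := fun s t h1 h2 h3 => (hlim s t h1 h2 h3).2.2.2.2.2.1
  have l222 := fun s t h1 h2 h3 => (hlim s t h1 h2 h3).2.2.2.2.2.2
  have lt112 := fun s t h1 h2 h3 => (hlimt s t h1 h2 h3).1
  have lt121 := fun s t h1 h2 h3 => (hlimt s t h1 h2 h3).2.1
  have lt211 := fun s t h1 h2 h3 => (hlimt s t h1 h2 h3).2.2.1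
  have lt122 := fun s t h1 h2 h3 => (hlimt s t h1 h2 h3).2.2.2.1
  have lt212 := fun s t h1 h2 h3 => (hlimt s t h1 h2 h3).2.2.2.2.1
  have lt221 := fun s t h1 h2 h3 => (hlimt s t h1 h2 h3).2.2.2.2.2.1
  have lt222 := fun s t h1 h2 h3 => (hlimt s t h1 h2 h3).2.2.2.2.2.2
  have hmono : ∀ θ : ℝ, 2 * α + γ ≤ θ →
      (1 - 2 ^ (1 - θ))⁻¹ * (4 * M) * ε ≤ (1 - 2 ^ (1 - (2 * α + γ)))⁻¹ * (4 * M) * ε := by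
    intro θ hθ'
    have e1 : (2:ℝ) ^ (1 - θ) ≤ 2 ^ (1 - (2 * α + γ)) :=
      (Real.rpow_le_rpow_left_iff (by norm_num : (1:ℝ) < 2)).mpr (by linarith)
    apply mul_le_mul_of_nonneg_right _ hε.le
    apply mul_le_mul_of_nonneg_right _ (by positivity)
    exact inv_anti₀ hr0 (by linarith)
  have h112 := case_bound (T := T) (a := α) (c := γ) (θ := 2 * α + γ) hM hε hα0 hγ0
    (by linarith) hαγ B1 Bt1 B1 Bt1 W1 Wt1 IBW ItBW B2 Bt2 X112 Xt112
    hB1 (hIBW.congr_exp (by ring)) (hB2.congr_exp (by ring)) hW1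
    hBt1 (hItBW.congr_exp (by ring)) (hBt2.congr_exp (by ring)) hWt1
    hdB1 (hdIBW.congr_exp (by ring)) (hdB2.congr_exp (by ring)) hdW1
    cB1 cW1 cIBW cB2 ctB1 ctW1 ctIBW ctB2 l112 lt112
  have h121 := case_bound (T := T) (a := α) (c := α) (θ := 2 * α + γ) hM hε hα0 hα0
    (by linarith) hαγ B1 Bt1 W1 Wt1 B1 Bt1 IWB ItWB IBW ItBW X121 Xt121
    hB1 (hIWB.congr_exp (by ring)) (hIBW.congr_exp (by ring)) hB1
    hBt1 (hItWB.congr_exp (by ring)) (hItBW.congr_exp (by ring)) hBt1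
    hdB1 (hdIWB.congr_exp (by ring)) (hdIBW.congr_exp (by ring)) hdB1
    cB1 cB1 cIWB cIBW ctB1 ctB1 ctIWB ctIBW l121 lt121
  have h211 := case_bound (T := T) (a := γ) (c := α) (θ := 2 * α + γ) hM hε hγ0 hα0
    (by linarith) hαγ W1 Wt1 B1 Bt1 B1 Bt1 B2 Bt2 IWB ItWB X211 Xt211
    hW1 (hB2.congr_exp (by ring)) (hIWB.congr_exp (by ring)) hB1
    hWt1 (hBt2.congr_exp (by ring)) (hItWB.congr_exp (by ring)) hBt1
    hdW1 (hdB2.congr_exp (by ring)) (hdIWB.congr_exp (by ring)) hdB1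
    cW1 cB1 cB2 cIWB ctW1 ctB1 ctB2 ctIWB l211 lt211
  have h122 := case_bound (T := T) (a := α) (c := γ) (θ := α + 2 * γ) hM hε hα0 hγ0
    (by linarith) hθ2 B1 Bt1 W1 Wt1 W1 Wt1 W2 Wt2 IBW ItBW X122 Xt122
    hB1 (hW2.congr_exp (by ring)) (hIBW.congr_exp (by ring)) hW1
    hBt1 (hWt2.congr_exp (by ring)) (hItBW.congr_exp (by ring)) hWt1
    hdB1 (hdW2.congr_exp (by ring)) (hdIBW.congr_exp (by ring)) hdW1
    cB1 cW1 cW2 cIBW ctB1 ctW1 ctW2 ctIBW l122 lt122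
  have h212 := case_bound (T := T) (a := γ) (c := γ) (θ := α + 2 * γ) hM hε hγ0 hγ0
    (by linarith) hθ2 W1 Wt1 B1 Bt1 W1 Wt1 IBW ItBW IWB ItWB X212 Xt212
    hW1 (hIBW.congr_exp (by ring)) (hIWB.congr_exp (by ring)) hW1
    hWt1 (hItBW.congr_exp (by ring)) (hItWB.congr_exp (by ring)) hWt1
    hdW1 (hdIBW.congr_exp (by ring)) (hdIWB.congr_exp (by ring)) hdW1
    cW1 cW1 cIBW cIWB ctW1 ctW1 ctIBW ctIWB l212 lt212
  have h221 := case_bound (T := T) (a := γ) (c := α) (θ := α + 2 * γ) hM hε hγ0 hα0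
    (by linarith) hθ2 W1 Wt1 W1 Wt1 B1 Bt1 IWB ItWB W2 Wt2 X221 Xt221
    hW1 (hIWB.congr_exp (by ring)) (hW2.congr_exp (by ring)) hB1
    hWt1 (hItWB.congr_exp (by ring)) (hWt2.congr_exp (by ring)) hBt1
    hdW1 (hdIWB.congr_exp (by ring)) (hdW2.congr_exp (by ring)) hdB1
    cW1 cB1 cIWB cW2 ctW1 ctB1 ctIWB ctW2 l221 lt221
  have h222 := case_bound (T := T) (a := γ) (c := γ) (θ := 3 * γ) hM hε hγ0 hγ0
    (by linarith) hθ3 W1 Wt1 W1 Wt1 W1 Wt1 W2 Wt2 W2 Wt2 X222 Xt222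
    hW1 (hW2.congr_exp (by ring)) (hW2.congr_exp (by ring)) hW1
    hWt1 (hWt2.congr_exp (by ring)) (hWt2.congr_exp (by ring)) hWt1
    hdW1 (hdW2.congr_exp (by ring)) (hdW2.congr_exp (by ring)) hdW1
    cW1 cW1 cW2 cW2 ctW1 ctW1 ctW2 ctW2 l222 lt222
  exact ⟨h112.weaken (hmono _ le_rfl), h121.weaken (hmono _ le_rfl),
    h211.weaken (hmono _ le_rfl), h122.weaken (hmono _ (by linarith)),
    h212.weaken (hmono _ (by linarith)), h221.weaken (hmono _ (by linarith)),
    h222.weaken (hmono _ (by linarith))⟩
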